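/- Let G be a finite connected simple graph and let u, v be vertices with dist(u,v) = D. Write N_i for the set of vertices at distance exactly i from u. Then for every integer j with 0 ≤ j ≤ D − 2, the independence number of the induced subgraph G[N_j ∪ N_{j+1} ∪ N_{j+2}] satisfies α(G[N_j ∪ N_{j+1} ∪ N_{j+2}]) ≤ α(G) − ⌊(D − 3)/2⌋. -/

import Mathlib

open SimpleGraph

lemma distA {V : Type*} {G : SimpleGraph V} (hG : G.Connected) :
    ∀ {a b : V} (p : G.Walk a b) (i : ℕ), G.dist a (p.getVert i) ≤ i := by
  intro a b p
  induction p with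
  | @nil a =>
    intro i
    have hn : (Walk.nil : G.Walk a a).getVert i = a := rfl
    simp [hn, SimpleGraph.dist_self]
  | @cons a c b h q ih =>
    intro i
    match i with
    | 0 => simp
    | (i+1) =>
      rw [Walk.getVert_cons_succ]
      have h1 : G.dist a (q.getVert i) ≤ G.dist a c + G.dist c (q.getVert i) :=
        hG.dist_triangle
      have h2 := dist_eq_one_iff_adj.mpr h
      have h3 := ih i
      omega

lemma distB {V : Type*} {G : SimpleGraph V} (hG : G.Connected) :
    ∀ {a b : V} (p : G.Walk a b) (i : ℕ), G.dist (p.getVert i) b ≤ p.length - i := by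
  intro a b p
  induction p with
  | @nil a =>
    intro i
    have hn : (Walk.nil : G.Walk a a).getVert i = a := rfl
    simp [hn, SimpleGraph.dist_self]
  | @cons a c b h q ih =>
    intro i
    match i with
    | 0 =>
      simp only [Walk.getVert_zero, Walk.length_cons, Nat.sub_zero]
      have h1 : G.dist a b ≤ G.dist a c + G.dist c b := hG.dist_triangle
      have h2 := dist_eq_one_iff_adj.mpr h
      have h3 := ih 0
      rw [Walk.getVert_zero] at h3
      omega
    | (i+1) =>
      rw [Walk.getVert_cons_succ, Walk.length_cons]
      have := ih i
      omega


/-- The independence number of a finite simple graph: the largest cardinality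
of a set of pairwise non-adjacent vertices. -/
noncomputable def indepNum {V : Type*} (G : SimpleGraph V) : ℕ :=
  sSup {n | ∃ s : Finset V, (∀ x ∈ s, ∀ y ∈ s, ¬ G.Adj x y) ∧ s.card = n}

/-- Let `G` be a finite connected simple graph, `u v` vertices at distance `D`,
`N i` the set of vertices at distance exactly `i` from `u`.  Then for every
`0 ≤ j ≤ D - 2`,
`α(G[N j ∪ N (j+1) ∪ N (j+2)]) ≤ α(G) - ⌊(D-3)/2⌋`
(the floor being `0` when `D ≤ 3`). -/
theorem stmt3 {V : Type*} [Fintype V] (G : SimpleGraph V) (hG : G.Connected)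
    (u v : V) (D : ℕ) (hD : G.dist u v = D) (j : ℕ) (hj : j + 2 ≤ D) :
    _root_.indepNum (G.induce
        {x | G.dist u x = j ∨ G.dist u x = j + 1 ∨ G.dist u x = j + 2})
      + (D - 3) / 2 ≤ _root_.indepNum G := by
  classical
  set Sset : Set V := {x | G.dist u x = j ∨ G.dist u x = j + 1 ∨ G.dist u x = j + 2}
    with hSset
  obtain ⟨p, hp⟩ := hG.exists_walk_length_eq_dist u v
  rw [hD] at hp
  set w : ℕ → V := fun i => p.getVert i with hw
  have hdw : ∀ i, i ≤ D → G.dist u (w i) = i := by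
    intro i hi
    have h1 := distA hG p i
    have h2 := distB hG p i
    rw [hp] at h2
    have h3 : G.dist u v ≤ G.dist u (w i) + G.dist (w i) v := hG.dist_triangle
    simp only [hw, hD] at *
    omega
  have nadj : ∀ x y : V, G.dist u x + 2 ≤ G.dist u y → ¬ G.Adj x y := by
    intro x y hxy hadj
    have h1 : G.dist u y ≤ G.dist u x + G.dist x y := hG.dist_triangle
    have h2 := dist_eq_one_iff_adj.mpr hadj
    omega
  haveI : Fintype ↥Sset := Fintype.ofFinite _
  have hne : ({n | ∃ s : Finset ↥Sset,
      (∀ x ∈ s, ∀ y ∈ s, ¬ (G.induce Sset).Adj x y) ∧ s.card = n} : Set ℕ).Nonempty :=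
    ⟨0, ∅, by simp, by simp⟩
  have hbdd : BddAbove {n | ∃ s : Finset ↥Sset,
      (∀ x ∈ s, ∀ y ∈ s, ¬ (G.induce Sset).Adj x y) ∧ s.card = n} := by
    refine ⟨Fintype.card ↥Sset, ?_⟩
    rintro n ⟨s, -, rfl⟩
    exact s.card_le_univ
  have hmem := Nat.sSup_mem hne hbdd
  obtain ⟨S, hSind, hScard⟩ := hmem
  have hIeq : _root_.indepNum (G.induce Sset) = S.card := hScard.symm
  -- the extra vertices
  set EL : Finset V := (Finset.range (j/2)).image (fun k => w (2*k)) with hEL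
  set ER : Finset V := (Finset.range ((D-j-2)/2)).image (fun k => w (j+4+2*k)) with hER
  set T : Finset V := (S.image Subtype.val ∪ EL) ∪ ER with hT
  -- distance facts
  have hdS : ∀ x ∈ S.image Subtype.val, j ≤ G.dist u x ∧ G.dist u x ≤ j + 2 := by
    intro x hx
    obtain ⟨a, -, rfl⟩ := Finset.mem_image.mp hx
    have := a.2
    simp only [hSset, Set.mem_setOf_eq] at this
    omega
  have hdEL : ∀ x ∈ EL, ∃ k, k < j/2 ∧ x = w (2*k) ∧ G.dist u x = 2*k := by
    intro x hx
    obtain ⟨k, hk, rfl⟩ := Finset.mem_image.mp hx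
    rw [Finset.mem_range] at hk
    exact ⟨k, hk, rfl, hdw _ (by omega)⟩
  have hdER : ∀ x ∈ ER, ∃ k, k < (D-j-2)/2 ∧ x = w (j+4+2*k) ∧ G.dist u x = j+4+2*k := by
    intro x hx
    obtain ⟨k, hk, rfl⟩ := Finset.mem_image.mp hx
    rw [Finset.mem_range] at hk
    exact ⟨k, hk, rfl, hdw _ (by omega)⟩
  -- independence of T
  have hTind : ∀ x ∈ T, ∀ y ∈ T, ¬ G.Adj x y := by
    intro x hx y hy hadj
    have hn1 : ¬ (G.dist u x + 2 ≤ G.dist u y) := fun h => nadj x y h hadj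
    have hn2 : ¬ (G.dist u y + 2 ≤ G.dist u x) := fun h => nadj y x h hadj.symm
    simp only [hT, Finset.mem_union] at hx hy
    rcases hx with (hx | hx) | hx
    · rcases hy with (hy | hy) | hy
      · obtain ⟨a, ha, rfl⟩ := Finset.mem_image.mp hx
        obtain ⟨b, hb, rfl⟩ := Finset.mem_image.mp hy
        exact hSind a ha b hb hadj
      · obtain ⟨k, hk, -, hd⟩ := hdEL y hy
        have := hdS x hx
        omega
      · obtain ⟨k, hk, -, hd⟩ := hdER y hy
        have := hdS x hx
        omega
    · obtain ⟨k, hk, rfl, hd⟩ := hdEL x hx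
      rcases hy with (hy | hy) | hy
      · have := hdS y hy
        omega
      · obtain ⟨k', hk', hy', hd'⟩ := hdEL y hy
        have hkk : k = k' := by omega
        rw [hy', ← hkk] at hadj
        exact hadj.ne rfl
      · obtain ⟨k', hk', -, hd'⟩ := hdER y hy
        omega
    · obtain ⟨k, hk, rfl, hd⟩ := hdER x hx
      rcases hy with (hy | hy) | hy
      · have := hdS y hy
        omega
      · obtain ⟨k', hk', -, hd'⟩ := hdEL y hy
        omega
      · obtain ⟨k', hk', hy', hd'⟩ := hdER y hy
        have hkk : k = k' := by omega
        rw [hy', ← hkk] at hadj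
        exact hadj.ne rfl
  -- cardinality of T
  have hcardEL : EL.card = j/2 := by
    rw [hEL, Finset.card_image_of_injOn, Finset.card_range]
    intro a ha b hb hab
    simp only [Finset.coe_range, Set.mem_Iio] at ha hb
    simp only [] at hab
    have h1 := hdw (2*a) (by omega)
    have h2 := hdw (2*b) (by omega)
    rw [hab] at h1
    omega
  have hcardER : ER.card = (D-j-2)/2 := by
    rw [hER, Finset.card_image_of_injOn, Finset.card_range]
    intro a ha b hb hab
    simp only [Finset.coe_range, Set.mem_Iio] at ha hb
    simp only [] at hab
    have h1 := hdw (j+4+2*a) (by omega)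
    have h2 := hdw (j+4+2*b) (by omega)
    rw [hab] at h1
    omega
  have hd1 : Disjoint (S.image Subtype.val) EL := by
    rw [Finset.disjoint_left]
    intro a ha hb
    have := hdS a ha
    obtain ⟨k, hk, -, hd⟩ := hdEL a hb
    omega
  have hd2 : Disjoint (S.image Subtype.val ∪ EL) ER := by
    rw [Finset.disjoint_left]
    intro a ha hb
    obtain ⟨k, hk, -, hd⟩ := hdER a hb
    rcases Finset.mem_union.mp ha with ha | ha
    · have := hdS a ha
      omega
    · obtain ⟨k', hk', -, hd'⟩ := hdEL a ha
      omega
  have hcardT : T.card = S.card + j/2 + (D-j-2)/2 := by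
    rw [hT, Finset.card_union_of_disjoint hd2, Finset.card_union_of_disjoint hd1,
      Finset.card_image_of_injective _ Subtype.val_injective, hcardEL, hcardER]
  -- T.card ≤ indepNum G
  have hle : T.card ≤ _root_.indepNum G := by
    apply le_csSup
    · refine ⟨Fintype.card V, ?_⟩
      rintro n ⟨s, -, rfl⟩
      exact s.card_le_univ
    · exact ⟨T, hTind, rfl⟩
  calc _root_.indepNum (G.induce Sset) + (D - 3) / 2 = S.card + (D-3)/2 := by rw [hIeq]
    _ ≤ S.card + j/2 + (D-j-2)/2 := by omega
    _ = T.card := hcardT.symm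
    _ ≤ _root_.indepNum G := hle
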